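/- arXiv:1808.09738 — 2 statements merged into one kernel-verified Lean document; each statement's English description precedes it below -/
import Mathlib

section
/- Let 𝒳 be a non-trivial well-pointed coherent category in which the unique morphism X → 1 is a retraction for every X ≇ 0, and let X be an object of 𝒳 such that Sub(X) is a complete lattice. Then the surjective lattice homomorphism Vs : Sub(X) → K(Spec X) onto the lattice of closed subsets of Spec X is a lattice isomorphism if and only if Sub(X) is atomic (every element of Sub(X) is the supremum of the atoms below it). -/
open CategoryTheory CategoryTheory.Limits Opposite

universe w' w v u

namespace Paper

variable {C : Type u} [Category.{v} C]

/-- "X ≇ 0": the object `X` is not initial. -/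
def NonInitial (X : C) : Prop := IsInitial X → False

/-- The category is non-trivial: `0 ≇ 1`, i.e. no object is both initial and terminal. -/
def NonTrivialCat (C : Type u) [Category.{v} C] : Prop :=
  ∀ X : C, IsInitial X → IsTerminal X → False

section Terminal
variable (C) [HasTerminal C]

/-- The category is well-pointed: the functor of points `pt = Hom(1, -)` is faithful. -/
def WellPointed : Prop :=
  ∀ ⦃X Y : C⦄ (f g : X ⟶ Y), (∀ p : ⊤_ C ⟶ X, p ≫ f = p ≫ g) → f = g

/-- The unique morphism `X ⟶ 1` is a retraction for every `X ≇ 0`. -/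
def EnoughPoints : Prop :=
  ∀ X : C, NonInitial X → Nonempty (SplitEpi (terminal.from X))

end Terminal

/-- `b` is the bottom element of `Sub(X)`. -/
def IsBotIn {X : C} (b : Subobject X) : Prop := ∀ S : Subobject X, b ≤ S

/-- `S` is an atom of the subobject lattice `Sub(X)`. -/
def IsAtomIn {X : C} (S : Subobject X) : Prop :=
  ¬ IsBotIn S ∧ ∀ T : Subobject X, T < S → IsBotIn T

/-- `Sub(X)` is atomic: every subobject is the supremum of the atoms below it. -/
def AtomicSubobjects (X : C) : Prop :=
  ∀ S : Subobject X, IsLUB {A : Subobject X | IsAtomIn A ∧ A ≤ S} S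

/-- `S` is a complemented subobject: it has a complement `T` with `S ⊓ T = ⊥`, `S ⊔ T = ⊤`. -/
def IsComplementedSub {X : C} (S : Subobject X) : Prop :=
  ∃ T m : Subobject X, IsGLB {S, T} m ∧ IsBotIn m ∧ IsLUB {S, T} ⊤

/-- A (non-empty) filter of the Boolean center `B(X)` of `Sub(X)`. -/
structure CenterFilter (X : C) where
  carrier : Set (Subobject X)
  mem_complemented : ∀ S ∈ carrier, IsComplementedSub S
  nonempty : carrier.Nonempty
  inf_mem : ∀ S ∈ carrier, ∀ T ∈ carrier, ∀ m : Subobject X, IsGLB {S, T} m → m ∈ carrier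
  mem_of_le : ∀ S ∈ carrier, ∀ T : Subobject X, IsComplementedSub T → S ≤ T → T ∈ carrier

theorem CenterFilter.ext' {X : C} {F G : CenterFilter X} (h : F.carrier = G.carrier) : F = G := by
  cases F; cases G; cases h; rfl

/-- Filters of the Boolean center, ordered by reverse inclusion. -/
instance (X : C) : PartialOrder (CenterFilter X) where
  le F G := G.carrier ⊆ F.carrier
  le_refl _ := subset_rfl
  le_trans _ _ _ h1 h2 := fun _ hx => h1 (h2 hx)
  le_antisymm _ _ h1 h2 := CenterFilter.ext' (Set.Subset.antisymm h2 h1)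

/-- An object `X` is filtral if `Sub(X)` is isomorphic, as a lattice, to the lattice of
non-empty filters of the Boolean center of `Sub(X)`. -/
def FiltralObject (X : C) : Prop :=
  Nonempty (Subobject X ≃o CenterFilter X)

/-- A category is filtral if every object is covered by a filtral one. -/
def Filtral (C : Type u) [Category.{v} C] : Prop :=
  ∀ Y : C, ∃ (X : C) (f : X ⟶ Y), Nonempty (RegularEpi f) ∧ FiltralObject X

/-- `Sub(X)` is a complete lattice (every subset has an infimum). -/
def MonoCompleteAt (X : C) : Prop :=
  ∀ s : Set (Subobject X), ∃ m : Subobject X, IsGLB s m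

/-- The category is mono-complete: every subobject poset is a complete lattice. -/
def MonoComplete (C : Type u) [Category.{v} C] : Prop := ∀ X : C, MonoCompleteAt X

section Points
variable [HasTerminal C]

/-- `Vs S` is the set of points of `X` factoring through the subobject `S`. -/
def Vs {X : C} (S : Subobject X) : Set (⊤_ C ⟶ X) := {p | S.Factors p}

open Classical in
/-- `Cg T` is the smallest subobject of `X` through which every point in `T` factors
(defined whenever the relevant infimum exists). -/
noncomputable def Cg {X : C} (T : Set (⊤_ C ⟶ X)) : Subobject X :=
  if h : ∃ m : Subobject X, IsGLB {S : Subobject X | ∀ p ∈ T, S.Factors p} m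
  then h.choose else ⊤

/-- The closure operator `cl = Vs ∘ Cg` on the power set of `pt X`. -/
noncomputable def cl {X : C} (T : Set (⊤_ C ⟶ X)) : Set (⊤_ C ⟶ X) := Vs (Cg T)

end Points

/-- Images are stable under pullback (together with finite limits and images, this is
the definition of a regular category). -/
class StableImages (C : Type u) [Category.{v} C] [HasFiniteLimits C] [HasImages C] : Prop where
  image_pullback : ∀ {X Y Z : C} (f : X ⟶ Y) (g : Z ⟶ Y),
    (Subobject.pullback g).obj (imageSubobject f) = imageSubobject (pullback.snd f g)

/-- The extra structure of a coherent category: each `Sub(X)` has finite joins and these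
are preserved by the pullback functors. -/
class CoherentJoins (C : Type u) [Category.{v} C] [HasPullbacks C] : Prop where
  exists_bot : ∀ X : C, ∃ b : Subobject X, IsBotIn b
  exists_sup : ∀ {X : C} (S T : Subobject X), ∃ U : Subobject X, IsLUB {S, T} U
  pullback_bot : ∀ {X Y : C} (f : X ⟶ Y) (b : Subobject Y),
    IsBotIn b → IsBotIn ((Subobject.pullback f).obj b)
  pullback_sup : ∀ {X Y : C} (f : X ⟶ Y) (S T U : Subobject Y), IsLUB {S, T} U →
    IsLUB {(Subobject.pullback f).obj S, (Subobject.pullback f).obj T}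
      ((Subobject.pullback f).obj U)

/-- An internal equivalence relation: a jointly-monic pair which is reflexive, symmetric and
transitive (expressed via generalised elements). -/
structure IsEquivRelPair {R X : C} (r₁ r₂ : R ⟶ X) : Prop where
  jointlyMono : ∀ {Z : C} (a b : Z ⟶ R), a ≫ r₁ = b ≫ r₁ → a ≫ r₂ = b ≫ r₂ → a = b
  refl : ∀ {Z : C} (a : Z ⟶ X), ∃ h : Z ⟶ R, h ≫ r₁ = a ∧ h ≫ r₂ = a
  symm : ∀ {Z : C} (a b : Z ⟶ X), (∃ h : Z ⟶ R, h ≫ r₁ = a ∧ h ≫ r₂ = b) →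
    ∃ h : Z ⟶ R, h ≫ r₁ = b ∧ h ≫ r₂ = a
  trans : ∀ {Z : C} (a b c : Z ⟶ X), (∃ h : Z ⟶ R, h ≫ r₁ = a ∧ h ≫ r₂ = b) →
    (∃ h : Z ⟶ R, h ≫ r₁ = b ∧ h ≫ r₂ = c) →
    ∃ h : Z ⟶ R, h ≫ r₁ = a ∧ h ≫ r₂ = c

/-- Every internal equivalence relation is effective: it is the kernel pair of its
coequaliser. -/
def EffectiveEquivRels (C : Type u) [Category.{v} C] : Prop :=
  ∀ {R X : C} (r₁ r₂ : R ⟶ X), IsEquivRelPair r₁ r₂ →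
    ∃ (Y : C) (q : X ⟶ Y) (w : r₁ ≫ q = r₂ ≫ q),
      Nonempty (IsColimit (Cofork.ofπ q w)) ∧ Nonempty (IsLimit (PullbackCone.mk r₁ r₂ w))

/-- An object is decidable if its diagonal is a complemented subobject of `X ⨯ X`. -/
def DecidableObj [HasBinaryProducts C] (X : C) : Prop :=
  ∃ (Y : C) (g : Y ⟶ X ⨯ X), Nonempty (IsColimit (BinaryCofan.mk (diag X) g))

/-- An object is pro-decidable if it is a codirected (cofiltered) limit of decidable objects. -/
def ProDecidableObj [HasBinaryProducts C] (X : C) : Prop :=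
  ∃ (J : Type v) (_ : SmallCategory J) (_ : IsCofiltered J) (D : J ⥤ C) (c : Cone D),
    (∀ j, DecidableObj (D.obj j)) ∧ Nonempty (IsLimit c) ∧ Nonempty (c.pt ≅ X)



section Proofs
set_option linter.unusedSectionVars false

variable [HasFiniteLimits C]

omit [Category.{v} C] in
lemma aux_nothing : True := trivial

lemma point_isSplitMono {X : C} (p : ⊤_ C ⟶ X) : IsSplitMono p :=
  IsSplitMono.mk' ⟨terminal.from X, Subsingleton.elim _ _⟩

lemma factors_iff_mk_le {X A : C} (S : Subobject X) (p : A ⟶ X) [Mono p] :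
    S.Factors p ↔ Subobject.mk p ≤ S := by
  constructor
  · intro h
    exact Subobject.mk_le_of_comm (S.factorThru p h) (S.factorThru_arrow p h)
  · intro h
    exact Subobject.factors_of_le _ h (Subobject.mk_factors_self p)

lemma pullback_obj_eq_top_of_factors {X Z : C} {S : Subobject X} {p : Z ⟶ X}
    (h : S.Factors p) : (Subobject.pullback p).obj S = ⊤ := by
  have hg : S.factorThru p h ≫ S.arrow = p := S.factorThru_arrow p h
  have h1 : (Subobject.pullback S.arrow).obj S = ⊤ := by
    have := Subobject.pullback_self S.arrow
    rwa [Subobject.mk_arrow] at this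
  calc (Subobject.pullback p).obj S
      = (Subobject.pullback (S.factorThru p h ≫ S.arrow)).obj S := by rw [hg]
    _ = (Subobject.pullback (S.factorThru p h)).obj
          ((Subobject.pullback S.arrow).obj S) := Subobject.pullback_comp _ _ _
    _ = ⊤ := by rw [h1]; exact Subobject.pullback_top _

lemma not_isBotIn_top (hnt : NonTrivialCat C) (hwp : WellPointed C)
    (hpt : EnoughPoints C) : ¬ IsBotIn (⊤ : Subobject (⊤_ C)) := by
  intro hbot
  have hiso : ∀ {U : C} (m : U ⟶ ⊤_ C), Mono m → IsIso m := by
    intro U m hm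
    haveI := hm
    have : Subobject.mk m = ⊤ := le_antisymm le_top (hbot _)
    exact (Subobject.isIso_iff_mk_eq_top m).mpr this
  have huniq : ∀ {Z : C} (p q : ⊤_ C ⟶ Z), p = q := by
    intro Z p q
    haveI : IsIso (equalizer.ι p q) := hiso _ inferInstance
    calc p = inv (equalizer.ι p q) ≫ equalizer.ι p q ≫ p := by simp
    _ = inv (equalizer.ι p q) ≫ equalizer.ι p q ≫ q := by rw [equalizer.condition]
    _ = q := by simp
  by_cases h0 : ∃ Z : C, Nonempty (IsInitial Z)
  · obtain ⟨Z0, ⟨hZ0⟩⟩ := h0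
    have hno : (⊤_ C ⟶ Z0) → False := by
      intro p
      refine hnt Z0 hZ0 ?_
      refine IsTerminal.ofUniqueHom (fun Y => terminal.from Y ≫ p) ?_
      intro Y m
      apply hwp
      intro q
      exact huniq _ _
    have hm : Mono (terminal.from Z0) := by
      constructor
      intro Z f g _
      apply hwp
      intro q
      exact (hno (q ≫ f)).elim
    have := hiso (terminal.from Z0) hm
    exact hnt Z0 hZ0 (IsTerminal.ofIso terminalIsTerminal (asIso (terminal.from Z0)).symm)
  · push_neg at h0
    have hinit : IsInitial (⊤_ C) := by
      refine IsInitial.ofUniqueHom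
        (fun Y => ((hpt Y (fun h => (h0 Y).false h)).some).section_) ?_
      intro Y m
      exact huniq _ _
    exact hnt _ hinit terminalIsTerminal

lemma not_factors_bot [CoherentJoins C] (hnt : NonTrivialCat C) (hwp : WellPointed C)
    (hpt : EnoughPoints C) {X : C} {S : Subobject X} (hS : IsBotIn S)
    {p : ⊤_ C ⟶ X} (hp : S.Factors p) : False := by
  have h1 : IsBotIn ((Subobject.pullback p).obj S) := CoherentJoins.pullback_bot p S hS
  rw [pullback_obj_eq_top_of_factors hp] at h1
  exact not_isBotIn_top hnt hwp hpt h1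

lemma exists_point_of_not_bot (hpt : EnoughPoints C)
    {X : C} {S : Subobject X} (hS : ¬ IsBotIn S) :
    ∃ p : ⊤_ C ⟶ X, S.Factors p := by
  by_cases h : Nonempty (IsInitial (S : C))
  · exact absurd (fun T => Subobject.le_of_comm (h.some.to _) (h.some.hom_ext _ _)) hS
  · have s := (hpt (S : C) (fun hi => h ⟨hi⟩)).some
    exact ⟨s.section_ ≫ S.arrow, Subobject.factors_comp_arrow _⟩

lemma isGLB_cg {X : C} (hX : MonoCompleteAt X) (T : Set (⊤_ C ⟶ X)) :
    IsGLB {S : Subobject X | ∀ p ∈ T, S.Factors p} (Cg T) := by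
  have h : ∃ m : Subobject X, IsGLB {S : Subobject X | ∀ p ∈ T, S.Factors p} m := hX _
  rw [Cg, dif_pos h]
  exact h.choose_spec

lemma cg_factors {X : C} (hX : MonoCompleteAt X) {T : Set (⊤_ C ⟶ X)}
    {p : ⊤_ C ⟶ X} (hp : p ∈ T) : (Cg T).Factors p := by
  haveI := point_isSplitMono p
  rw [factors_iff_mk_le]
  refine (isGLB_cg hX T).2 (fun S hS => ?_)
  exact (factors_iff_mk_le S p).mp (hS p hp)

lemma vs_mono {X : C} {S S' : Subobject X} (h : S ≤ S') : Vs S ⊆ Vs S' :=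
  fun p hp => Subobject.factors_of_le p h hp

lemma cg_mono {X : C} (hX : MonoCompleteAt X) {T T' : Set (⊤_ C ⟶ X)} (h : T ⊆ T') :
    Cg T ≤ Cg T' :=
  (isGLB_cg hX T').2 (fun S hS => (isGLB_cg hX T).1 (fun p hp => hS p (h hp)))

lemma cg_vs_le {X : C} (hX : MonoCompleteAt X) (S : Subobject X) : Cg (Vs S) ≤ S :=
  (isGLB_cg hX (Vs S)).1 (fun _ hp => hp)

lemma cl_vs {X : C} (hX : MonoCompleteAt X) (S : Subobject X) : cl (Vs S) = Vs S := by
  apply Set.Subset.antisymm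
  · exact vs_mono (cg_vs_le hX S)
  · intro p hp
    exact cg_factors hX hp

lemma isAtomIn_mk_point [CoherentJoins C] (hnt : NonTrivialCat C) (hwp : WellPointed C)
    (hpt : EnoughPoints C) {X : C} (p : ⊤_ C ⟶ X) :
    haveI := point_isSplitMono p
    IsAtomIn (Subobject.mk p) := by
  haveI := point_isSplitMono p
  constructor
  · intro hb
    exact not_factors_bot hnt hwp hpt hb (Subobject.mk_factors_self p)
  · intro T hT
    by_contra hTb
    obtain ⟨q, hq⟩ := exists_point_of_not_bot hpt hTb
    have hq' : (Subobject.mk p).Factors q := Subobject.factors_of_le _ hT.le hq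
    have hqp : q = p := by
      have harr : (Subobject.mk p).factorThru q hq' ≫ (Subobject.mk p).arrow = q :=
        Subobject.factorThru_arrow _ _ _
      have h1 : ((Subobject.mk p).factorThru q hq' ≫ (Subobject.underlyingIso p).hom) ≫ p = q := by
        rw [Category.assoc, Subobject.underlyingIso_hom_comp_eq_mk]
        exact harr
      have h2 : (Subobject.mk p).factorThru q hq' ≫ (Subobject.underlyingIso p).hom = 𝟙 _ :=
        Subsingleton.elim _ _
      rw [h2, Category.id_comp] at h1
      exact h1.symm
    rw [hqp] at hq
    exact hT.not_ge ((factors_iff_mk_le T p).mp hq)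

lemma atom_eq_mk_point [CoherentJoins C] (hnt : NonTrivialCat C) (hwp : WellPointed C)
    (hpt : EnoughPoints C) {X : C} {A : Subobject X} (hA : IsAtomIn A) :
    ∃ p : ⊤_ C ⟶ X, A.Factors p ∧
      haveI := point_isSplitMono p
      A = Subobject.mk p := by
  obtain ⟨p, hp⟩ := exists_point_of_not_bot hpt hA.1
  haveI := point_isSplitMono p
  refine ⟨p, hp, ?_⟩
  have hle : Subobject.mk p ≤ A := (factors_iff_mk_le A p).mp hp
  rcases lt_or_eq_of_le hle with hlt | heq
  · exact absurd (hA.2 _ hlt) (isAtomIn_mk_point hnt hwp hpt p).1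
  · exact heq.symm

end Proofs

/-- `Vs : Sub(X) → K(Spec X)` is a lattice isomorphism onto the lattice of closed sets
of `Spec X` (the fixed points of `cl`) iff `Sub(X)` is atomic. -/
theorem vs_orderIso_iff_atomic
    [WellPowered.{v} C] [HasFiniteLimits C] [HasImages C] [StableImages C] [CoherentJoins C]
    (hnt : NonTrivialCat C) (hwp : WellPointed C) (hpt : EnoughPoints C)
    (X : C) (hX : MonoCompleteAt X) :
    (∃ e : Subobject X ≃o {T : Set (⊤_ C ⟶ X) // cl T = T},
        ∀ S : Subobject X, (e S : Set (⊤_ C ⟶ X)) = Vs S) ↔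
      AtomicSubobjects X := by
  constructor
  · rintro ⟨e, he⟩ S
    constructor
    · intro A hA
      exact hA.2
    · intro U hU
      rw [← e.le_iff_le, ← Subtype.coe_le_coe, he, he]
      intro p hp
      haveI := point_isSplitMono p
      have hatom := isAtomIn_mk_point hnt hwp hpt p
      have hleS : Subobject.mk p ≤ S := (factors_iff_mk_le S p).mp hp
      have hleU : Subobject.mk p ≤ U := hU ⟨hatom, hleS⟩
      exact (factors_iff_mk_le S p).mpr hleS |> fun _ =>
        Subobject.factors_of_le p hleU (Subobject.mk_factors_self p)
  · intro hat
    have hleft : ∀ S : Subobject X, Cg (Vs S) = S := by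
      intro S
      refine le_antisymm (cg_vs_le hX S) ((hat S).2 ?_)
      rintro A ⟨hA, hAS⟩
      obtain ⟨p, hp, hmk⟩ := atom_eq_mk_point hnt hwp hpt hA
      haveI := point_isSplitMono p
      have hpS : p ∈ Vs S := Subobject.factors_of_le p hAS hp
      have : Subobject.mk p ≤ Cg (Vs S) :=
        (factors_iff_mk_le _ p).mp (cg_factors hX hpS)
      rw [hmk]
      exact this
    refine ⟨{ toFun := fun S => ⟨Vs S, cl_vs hX S⟩
              invFun := fun T => Cg T.1
              left_inv := hleft
              right_inv := fun T => Subtype.ext T.2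
              map_rel_iff' := ?_ }, fun S => rfl⟩
    intro a b
    rw [Subtype.mk_le_mk]
    constructor
    · intro h
      rw [← hleft a, ← hleft b]
      exact cg_mono hX h
    · exact vs_mono

end Paper
end

section
/- Let 𝒳 be a non-trivial positive and coherent category which is well-pointed. The following are equivalent: (1) Sub(X) is an atomic lattice for every object X of 𝒳; (2) the functor pt : 𝒳 → Set is conservative (reflects isomorphisms). -/
open CategoryTheory CategoryTheory.Limits Opposite

universe w' w v u

namespace Paper

variable {C : Type u} [Category.{v} C]

section AuxLemmas

lemma point_mono [HasTerminal C] {X : C} (p : ⊤_ C ⟶ X) : Mono p :=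
  ⟨fun g h _ => terminal.hom_ext g h⟩

/-- Every non-initial object has a point (well-pointedness + disjoint coproducts). -/
lemma point_of_nonInitial [HasTerminal C] [HasBinaryCoproducts C] [BinaryCoproductsDisjoint C]
    (hwp : WellPointed C) {X : C} (hX : NonInitial X) : Nonempty (⊤_ C ⟶ X) := by
  by_contra h
  have hpts : ∀ p : ⊤_ C ⟶ X, p ≫ (coprod.inl : X ⟶ X ⨿ X) = p ≫ coprod.inr :=
    fun p => absurd ⟨p⟩ h
  have heq : (coprod.inl : X ⟶ X ⨿ X) = coprod.inr := hwp _ _ hpts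
  have comm : 𝟙 X ≫ (coprod.inl : X ⟶ X ⨿ X) = 𝟙 X ≫ coprod.inr := by rw [heq]
  have hlim : IsLimit (PullbackCone.mk (𝟙 X) (𝟙 X) comm) := by
    refine PullbackCone.IsLimit.mk comm (fun s => s.fst) (fun s => Category.comp_id _)
      (fun s => ?_) (fun s m h₁ _ => by simpa using h₁)
    have : s.fst = s.snd := hwp s.fst s.snd (fun p => absurd ⟨p ≫ s.fst⟩ h)
    simpa [this] using Category.comp_id s.snd
  exact hX (IsInitial.ofBinaryCoproductDisjointOfIsLimit _ hlim)

lemma isBotIn_of_initial {X : C} {S : Subobject X} (h : IsInitial (S : C)) : IsBotIn S :=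
  fun T => Subobject.le_of_comm (h.to _) (h.hom_ext _ _)

lemma point_subobject_not_bot [HasTerminal C] [HasInitial C] [InitialMonoClass C]
    (hnt : NonTrivialCat C) {X : C} (p : ⊤_ C ⟶ X) [Mono p] :
    ¬ IsBotIn (Subobject.mk p) := by
  intro hb
  have hle := hb (Subobject.mk (initial.to X))
  let f : ⊤_ C ⟶ ⊥_ C := Subobject.ofMkLEMk p (initial.to X) hle
  have hterm : IsInitial (⊤_ C) :=
    IsInitial.ofIso initialIsInitial
      ⟨initial.to (⊤_ C), f, initial.hom_ext _ _, terminal.hom_ext _ _⟩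
  exact hnt _ hterm terminalIsTerminal

/-- Every point gives an atom of the subobject lattice. -/
lemma point_isAtom [HasTerminal C] [HasBinaryCoproducts C] [BinaryCoproductsDisjoint C] [HasInitial C]
    (hnt : NonTrivialCat C) (hwp : WellPointed C) {X : C} (p : ⊤_ C ⟶ X) [Mono p] :
    IsAtomIn (Subobject.mk p) := by
  haveI : InitialMonoClass C := initialMonoClass_of_coproductsDisjoint
  constructor
  · exact point_subobject_not_bot hnt p
  · intro T hT
    by_cases h : Nonempty (IsInitial (T : C))
    · exact isBotIn_of_initial h.some
    · exfalso
      obtain ⟨q⟩ := point_of_nonInitial hwp (fun hI => h ⟨hI⟩)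
      have hfac : (Subobject.mk p).Factors (q ≫ T.arrow) :=
        Subobject.factors_of_le _ hT.le ((Subobject.factors_iff _ _).mpr ⟨q, by simp⟩)
      have hrp : q ≫ T.arrow = p := by
        calc q ≫ T.arrow
            = (Subobject.mk p).factorThru _ hfac ≫ (Subobject.mk p).arrow :=
              (Subobject.factorThru_arrow _ _ hfac).symm
          _ = ((Subobject.mk p).factorThru _ hfac ≫ (Subobject.underlyingIso p).hom) ≫ p := by
              rw [Category.assoc, Subobject.underlyingIso_hom_comp_eq_mk]
          _ = 𝟙 _ ≫ p := by
              rw [terminal.hom_ext ((Subobject.mk p).factorThru _ hfac ≫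
                (Subobject.underlyingIso p).hom) (𝟙 _)]
          _ = p := Category.id_comp p
      exact hT.not_ge (Subobject.mk_le_of_comm q hrp)

end AuxLemmas

/-- In a non-trivial well-pointed positive coherent category, all subobject lattices are
atomic iff the functor of points is conservative. -/
theorem atomic_iff_pt_conservative
    [WellPowered.{v} C] [HasFiniteLimits C] [HasImages C] [StableImages C] [CoherentJoins C]
    [HasFiniteCoproducts C] [BinaryCoproductsDisjoint C]
    (hnt : NonTrivialCat C) (hwp : WellPointed C) :
    (∀ X : C, AtomicSubobjects X) ↔
      ∀ {X Y : C} (f : X ⟶ Y),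
        Function.Bijective (fun p : ⊤_ C ⟶ X => p ≫ f) → IsIso f := by
  haveI : InitialMonoClass C := initialMonoClass_of_coproductsDisjoint
  constructor
  · -- atomic ⇒ conservative
    intro hat X Y f hbij
    haveI hm : Mono f := ⟨fun {Z} a b hab => hwp a b (fun p => hbij.1 (by
      show (p ≫ a) ≫ f = (p ≫ b) ≫ f
      rw [Category.assoc, Category.assoc, hab]))⟩
    rw [Subobject.isIso_iff_mk_eq_top]
    have hlub := hat Y ⊤
    have hub : Subobject.mk f ∈ upperBounds {A : Subobject Y | IsAtomIn A ∧ A ≤ ⊤} := by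
      rintro A ⟨hA, -⟩
      have hni : NonInitial (A : C) := fun hI => hA.1 (isBotIn_of_initial hI)
      obtain ⟨q⟩ := point_of_nonInitial hwp hni
      haveI : Mono (q ≫ A.arrow) := point_mono _
      obtain ⟨p', hp'⟩ := hbij.2 (q ≫ A.arrow)
      have h1 : Subobject.mk (q ≫ A.arrow) ≤ A := Subobject.mk_le_of_comm q rfl
      have h2 : Subobject.mk (q ≫ A.arrow) ≤ Subobject.mk f :=
        Subobject.mk_le_mk_of_comm p' hp'
      have hnb : ¬ IsBotIn (Subobject.mk (q ≫ A.arrow)) := point_subobject_not_bot hnt _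
      have heq : Subobject.mk (q ≫ A.arrow) = A := by
        by_contra hne
        exact hnb (hA.2 _ (lt_of_le_of_ne h1 hne))
      exact heq ▸ h2
    exact le_antisymm le_top (hlub.2 hub)
  · -- conservative ⇒ atomic
    intro hcons X S
    constructor
    · rintro A ⟨-, hAS⟩
      exact hAS
    · intro U hU
      have hws : S ⊓ U ≤ S := inf_le_left
      set w : ((S ⊓ U : Subobject X) : C) ⟶ (S : C) := Subobject.ofLE _ _ hws with hw
      haveI hmw : Mono w := by
        have : w ≫ S.arrow = (S ⊓ U).arrow := Subobject.ofLE_arrow hws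
        exact mono_of_mono_fac this
      have hbij : Function.Bijective (fun p : ⊤_ C ⟶ ((S ⊓ U : Subobject X) : C) => p ≫ w) := by
        constructor
        · intro a b hab
          exact (cancel_mono w).1 hab
        · intro q
          have hfacS : S.Factors (q ≫ S.arrow) := (Subobject.factors_iff _ _).mpr ⟨q, by simp⟩
          haveI : Mono (q ≫ S.arrow) := point_mono _
          have hatom : IsAtomIn (Subobject.mk (q ≫ S.arrow)) := point_isAtom hnt hwp _
          have hleS : Subobject.mk (q ≫ S.arrow) ≤ S := Subobject.mk_le_of_comm q rfl
          have hleU : Subobject.mk (q ≫ S.arrow) ≤ U := hU ⟨hatom, hleS⟩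
          have hfacU : U.Factors (q ≫ S.arrow) :=
            Subobject.factors_of_le _ hleU (Subobject.mk_factors_self _)
          have hfacW : (S ⊓ U).Factors (q ≫ S.arrow) :=
            (Subobject.inf_factors _).2 ⟨hfacS, hfacU⟩
          refine ⟨(S ⊓ U).factorThru _ hfacW, ?_⟩
          have hcomp : ((S ⊓ U).factorThru _ hfacW ≫ w) ≫ S.arrow = q ≫ S.arrow := by
            rw [Category.assoc, hw, Subobject.ofLE_arrow, Subobject.factorThru_arrow]
          exact (cancel_mono S.arrow).1 hcomp
      haveI : IsIso w := hcons w hbij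
      have hSW : S ≤ S ⊓ U := Subobject.le_of_comm (inv w)
        (by rw [← Subobject.ofLE_arrow hws, ← hw, IsIso.inv_hom_id_assoc])
      exact hSW.trans inf_le_right

end Paper
end
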